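/- A prebornology 𝓑 on a set X is a bornology (i.e., closed under arbitrary finite unions, including unions of disjoint members) if and only if every finite subset of X is bounded (i.e., belongs to 𝓑). -/

import Mathlib

/-- A prebornology on a set `X`: a cover of `X` that is downward closed and
closed under unions of two intersecting members. -/
structure Prebornology (X : Type*) where
  carrier : Set (Set X)
  covers : ⋃₀ carrier = Set.univ
  downward : ∀ ⦃B C : Set X⦄, B ∈ carrier → C ⊆ B → C ∈ carrier
  union_inter : ∀ ⦃B C : Set X⦄, B ∈ carrier → C ∈ carrier →
    (B ∩ C).Nonempty → B ∪ C ∈ carrier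

theorem prebornology_isBornology_iff_finite_bounded
    {X : Type*} (𝓑 : Prebornology X) :
    (∅ ∈ 𝓑.carrier ∧ ∀ B ∈ 𝓑.carrier, ∀ C ∈ 𝓑.carrier, B ∪ C ∈ 𝓑.carrier) ↔
    (∀ S : Set X, S.Finite → S ∈ 𝓑.carrier) := by
  have hsing : ∀ x : X, {x} ∈ 𝓑.carrier := by
    intro x
    have hx : x ∈ ⋃₀ 𝓑.carrier := by rw [𝓑.covers]; trivial
    obtain ⟨B, hB, hxB⟩ := hx
    exact 𝓑.downward hB (by simpa using hxB)
  constructor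
  · rintro ⟨hempty, hunion⟩ S hS
    refine Set.Finite.induction_on _ hS hempty ?_
    intro a s _ _ ih
    rw [Set.insert_eq]
    exact hunion _ (hsing _) _ ih
  · intro hfin
    refine ⟨hfin ∅ Set.finite_empty, fun B hB C hC => ?_⟩
    rcases B.eq_empty_or_nonempty with rfl | ⟨b, hb⟩
    · simpa using hC
    rcases C.eq_empty_or_nonempty with rfl | ⟨c, hc⟩
    · simpa using hB
    have hbc : ({b, c} : Set X) ∈ 𝓑.carrier := hfin _ ((Set.finite_singleton c).insert b)
    have h1 : B ∪ {b, c} ∈ 𝓑.carrier :=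
      𝓑.union_inter hB hbc ⟨b, hb, by simp⟩
    have h2 : (B ∪ {b, c}) ∪ C ∈ 𝓑.carrier :=
      𝓑.union_inter h1 hC ⟨c, by simp, hc⟩
    exact 𝓑.downward h2 (by intro x hx; rcases hx with h | h <;> simp [h])
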